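/- Suppose the controls are constant, κᵖ(t) ≡ κᵖ > 0 and κᶜ(t) ≡ κᶜ with |κᶜ| < ν √(κᵖ γ_m). If u is a solution of the relative guidance-by-repulsion equation on [0,∞) with u(t) ≠ 0 for all t ≥ 0, then there exist constants 0 < c ≤ C < ∞ such that c ≤ |u(t)| ≤ C for all t ≥ 0, and moreover |u'(t)| is uniformly bounded in time. -/

import Mathlib

open Real Filter MeasureTheory intervalIntegral
open scoped RealInnerProductSpace Topology

noncomputable section

/-- Perpendicular rotation in the plane: `(a, b)^⊥ = (-b, a)`. -/
def perp (w : EuclideanSpace ℝ (Fin 2)) : EuclideanSpace ℝ (Fin 2) :=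
  (WithLp.equiv 2 (Fin 2 → ℝ)).symm ![-(w 1), w 0]

/-- The relative guidance-by-repulsion equation
`u'' + (κᵖ(t) f_d(|u|) − f_e(|u|)) u + ν u' = κᶜ(t) u^⊥` holds at time `t`. -/
def SolvesRel (fd fe : ℝ → ℝ) (ν : ℝ) (κp κc : ℝ → ℝ)
    (u : ℝ → EuclideanSpace ℝ (Fin 2)) (t : ℝ) : Prop :=
  deriv (deriv u) t + (κp t * fd ‖u t‖ - fe ‖u t‖) • u t + ν • deriv u t
    = κc t • perp (u t)

lemma inner_perp_self' (w : EuclideanSpace ℝ (Fin 2)) : ⟪perp w, w⟫ = 0 := by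
  simp [PiLp.inner_apply, Fin.sum_univ_two, perp]
  ring

lemma inner_perp_perp' (w : EuclideanSpace ℝ (Fin 2)) : ⟪perp w, perp w⟫ = ⟪w, w⟫ := by
  simp [-inner_self_eq_norm_sq_to_K, PiLp.inner_apply, Fin.sum_univ_two, perp]
  ring

def perpL : EuclideanSpace ℝ (Fin 2) →L[ℝ] EuclideanSpace ℝ (Fin 2) :=
  LinearMap.toContinuousLinearMap
    { toFun := perp
      map_add' := by intro x y; ext i; fin_cases i <;> simp [perp] <;> ring
      map_smul' := by intro c x; ext i; fin_cases i <;> simp [perp] }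

lemma HasDerivAt.perp' {f : ℝ → EuclideanSpace ℝ (Fin 2)} {f' : EuclideanSpace ℝ (Fin 2)} {t : ℝ}
    (h : HasDerivAt f f' t) : HasDerivAt (fun s => perp (f s)) (perp f') t := by
  exact (perpL.hasFDerivAt.comp_hasDerivAt t h :)

lemma norm_perp' (w : EuclideanSpace ℝ (Fin 2)) : ‖perp w‖ = ‖w‖ := by
  have h := inner_perp_perp' w
  rw [real_inner_self_eq_norm_sq, real_inner_self_eq_norm_sq] at h
  nlinarith [norm_nonneg (perp w), norm_nonneg w]

set_option maxHeartbeats 1000000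

/-- With constant controls `κᵖ > 0` and `|κᶜ| < ν √(κᵖ γ_m)`, the relative
distance `|u(t)|` is uniformly bounded above and below for all `t ≥ 0`, and the relative
velocity `|u'(t)|` is uniformly bounded in time. -/
theorem relative_distance_uniformly_bounded_constant_controls
    (fd fe : ℝ → ℝ) (rp γm : ℝ) (hrp : 0 < rp) (hγm : 0 < γm)
    (hfd_lip : LocallyLipschitzOn (Set.Ioi (0:ℝ)) fd)
    (hfe_lip : LocallyLipschitzOn (Set.Ioi (0:ℝ)) fe)
    (hf_neg : ∀ r : ℝ, 0 < r → r < rp → fd r - fe r < 0)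
    (hf_nonneg : ∀ r : ℝ, rp ≤ r → 0 ≤ fd r - fe r)
    (hf_deriv : 0 < deriv (fun r => fd r - fe r) rp)
    (hfd_nonneg : ∀ r : ℝ, 0 < r → 0 ≤ fd r)
    (hfd_bdd : ∃ C : ℝ, ∀ r : ℝ, 0 < r → fd r ≤ C)
    (hfd_lim : Filter.Tendsto fd Filter.atTop (nhds γm))
    (hfe_nonneg : ∀ r : ℝ, 0 < r → 0 ≤ fe r)
    (hfe_div : ¬ MeasureTheory.IntegrableOn (fun r => r * fe r) (Set.Ioc 0 rp))
    (hfe_lim : Filter.Tendsto fe Filter.atTop (nhds 0))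
    (ν : ℝ) (hν : 0 < ν) (κp κc : ℝ)
    (hκp : 0 < κp) (hκc : |κc| < ν * Real.sqrt (κp * γm))
    (u : ℝ → EuclideanSpace ℝ (Fin 2)) (hu : ContDiff ℝ 2 u)
    (hsol : ∀ t : ℝ, 0 ≤ t → SolvesRel fd fe ν (fun _ => κp) (fun _ => κc) u t)
    (hne : ∀ t : ℝ, 0 ≤ t → u t ≠ 0) :
    (∃ c C : ℝ, 0 < c ∧ c ≤ C ∧ ∀ t : ℝ, 0 ≤ t → c ≤ ‖u t‖ ∧ ‖u t‖ ≤ C) ∧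
    (∃ V : ℝ, ∀ t : ℝ, 0 ≤ t → ‖deriv u t‖ ≤ V) := by
  classical
  -- smoothness unpacking
  have h2 : (2 : WithTop ℕ∞) = 1 + 1 := by norm_num
  rw [h2, contDiff_succ_iff_deriv] at hu
  obtain ⟨hud, -, hu1⟩ := hu
  rw [contDiff_one_iff_deriv] at hu1
  obtain ⟨hu1d, hu2c⟩ := hu1
  set u1 : ℝ → EuclideanSpace ℝ (Fin 2) := deriv u with hu1def
  set u2 : ℝ → EuclideanSpace ℝ (Fin 2) := deriv u1 with hu2def
  -- constants
  obtain ⟨C0, hC0⟩ := hfd_bdd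
  set Cd : ℝ := max C0 0 with hCddef
  have hCd0 : 0 ≤ Cd := le_max_right _ _
  have hCd : ∀ r : ℝ, 0 < r → fd r ≤ Cd := fun r hr => (hC0 r hr).trans (le_max_left _ _)
  have hκc2 : κc ^ 2 < ν ^ 2 * (κp * γm) := by
    have h1 : 0 ≤ κp * γm := le_of_lt (by positivity)
    have h2 : |κc| ^ 2 < (ν * Real.sqrt (κp * γm)) ^ 2 := by
      apply pow_lt_pow_left₀ hκc (abs_nonneg _)
      norm_num
    rw [sq_abs, mul_pow, Real.sq_sqrt h1] at h2
    linarith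
  set θ : ℝ := (κc ^ 2 / (ν ^ 2 * (κp * γm)) + 1) / 2 with hθdef
  have hpg : (0:ℝ) < ν ^ 2 * (κp * γm) := by positivity
  have hθ0 : 0 < θ := by
    have : 0 ≤ κc ^ 2 / (ν ^ 2 * (κp * γm)) := by positivity
    rw [hθdef]; linarith
  have hθ1 : θ < 1 := by
    have : κc ^ 2 / (ν ^ 2 * (κp * γm)) < 1 := (div_lt_one hpg).2 hκc2
    rw [hθdef]; linarith
  have hθκ : κc ^ 2 < θ * (ν ^ 2 * (κp * γm)) := by
    have key : θ * (ν ^ 2 * (κp * γm)) = (κc ^ 2 + ν ^ 2 * (κp * γm)) / 2 := by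
      rw [hθdef]; field_simp
    rw [key]; linarith
  set c : ℝ := κc ^ 2 / (2 * θ * ν ^ 2) with hcdef
  have hc0 : 0 ≤ c := by positivity
  have hclt : c < κp * γm / 2 := by
    rw [hcdef, div_lt_div_iff₀ (by positivity) (by norm_num : (0:ℝ) < 2)]
    calc κc ^ 2 * 2 < θ * (ν ^ 2 * (κp * γm)) * 2 := by linarith
    _ = κp * γm * (2 * θ * ν ^ 2) := by ring
  -- kernels and potential
  set F : ℝ → ℝ := fun r => κp * fd r - fe r with hFdef
  have hFcont : ContinuousOn F (Set.Ioi 0) :=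
    (continuousOn_const.mul hfd_lip.continuousOn).sub hfe_lip.continuousOn
  set g : ℝ → ℝ := fun s => (1/2) * F (Real.sqrt s) with hgdef
  have hgcont : ContinuousOn g (Set.Ioi 0) :=
    continuousOn_const.mul (hFcont.comp Real.continuous_sqrt.continuousOn
      (fun s hs => Real.sqrt_pos.2 hs))
  have hrp2 : (0:ℝ) < rp ^ 2 := by positivity
  set G : ℝ → ℝ := fun y => ∫ s in (rp ^ 2)..y, g s with hGdef
  have hGderiv : ∀ y : ℝ, 0 < y → HasDerivAt G (g y) y := by
    intro y hy
    have hsub : Set.uIcc (rp ^ 2) y ⊆ Set.Ioi 0 := fun x hx =>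
      lt_of_lt_of_le (lt_min hrp2 hy) hx.1
    exact intervalIntegral.integral_hasDerivAt_right
      ((hgcont.mono hsub).intervalIntegrable)
      ⟨Set.Ioi 0, Ioi_mem_nhds hy, hgcont.aestronglyMeasurable measurableSet_Ioi⟩
      (hgcont.continuousAt (Ioi_mem_nhds hy))
  -- quantities along the solution
  set n : ℝ → ℝ := fun t => ⟪u t, u t⟫ with hndef
  have hnnorm : ∀ t : ℝ, n t = ‖u t‖ ^ 2 := fun t => real_inner_self_eq_norm_sq (u t)
  have hnpos : ∀ t : ℝ, 0 ≤ t → 0 < n t := fun t ht => by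
    rw [hnnorm t]; exact pow_pos (norm_pos_iff.2 (hne t ht)) 2
  have hnsqrt : ∀ t : ℝ, Real.sqrt (n t) = ‖u t‖ := fun t => by
    rw [hnnorm t]; exact Real.sqrt_sq (norm_nonneg _)
  set l : ℝ → ℝ := fun t => ⟪perp (u t), u1 t⟫ with hldef
  set H : ℝ → ℝ := fun t => (1/2) * ⟪u1 t, u1 t⟫ + G (n t) - (κc/ν) * l t with hHdef
  have hHderiv : ∀ t : ℝ, 0 ≤ t → HasDerivAt H
      (⟪u1 t, u2 t⟫ + F ‖u t‖ * ⟪u t, u1 t⟫ - (κc/ν) * ⟪perp (u t), u2 t⟫) t := by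
    intro t ht
    have hdu : HasDerivAt u (u1 t) t := (hud t).hasDerivAt
    have hdu1 : HasDerivAt u1 (u2 t) t := (hu1d t).hasDerivAt
    have h1 : HasDerivAt (fun s => ⟪u1 s, u1 s⟫) (2 * ⟪u1 t, u2 t⟫) t := by
      have := HasDerivAt.inner ℝ hdu1 hdu1
      refine this.congr_deriv ?_
      rw [real_inner_comm (u2 t) (u1 t)]; ring
    have hn' : HasDerivAt n (2 * ⟪u t, u1 t⟫) t := by
      have := HasDerivAt.inner ℝ hdu hdu
      refine this.congr_deriv ?_
      rw [real_inner_comm (u1 t) (u t)]; ring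
    have hG' : HasDerivAt (fun s => G (n s)) (g (n t) * (2 * ⟪u t, u1 t⟫)) t :=
      (hGderiv (n t) (hnpos t ht)).comp t hn'
    have hl' : HasDerivAt l (⟪perp (u t), u2 t⟫ + ⟪perp (u1 t), u1 t⟫) t :=
      HasDerivAt.inner ℝ hdu.perp' hdu1
    have hval : g (n t) * (2 * ⟪u t, u1 t⟫) = F ‖u t‖ * ⟪u t, u1 t⟫ := by
      rw [hgdef]; simp only []; rw [hnsqrt t]; ring
    have := ((h1.const_mul (1/2:ℝ)).add hG').sub (hl'.const_mul (κc/ν))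
    refine this.congr_deriv ?_
    rw [hval, inner_perp_self' (u1 t)]; ring
  -- the solution identity
  have hsol' : ∀ t : ℝ, 0 ≤ t →
      u2 t = κc • perp (u t) - F ‖u t‖ • u t - ν • u1 t := by
    intro t ht
    have h := hsol t ht
    rw [SolvesRel] at h
    rw [hFdef]
    simp only [← hu1def, ← hu2def] at h ⊢
    abel_nf
    abel_nf at h
    linear_combination (norm := module) h
  -- derivative of H is nonpositive
  have hHd_nonpos : ∀ t : ℝ, 0 < t → deriv H t ≤ 0 := by
    intro t ht
    have ht' : (0:ℝ) ≤ t := le_of_lt ht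
    rw [(hHderiv t ht').deriv]
    rw [hsol' t ht']
    set a := ‖u1 t‖ with hadef
    set b := ‖u t‖ with hbdef
    have expand : ⟪u1 t, κc • perp (u t) - F b • u t - ν • u1 t⟫
        + F b * ⟪u t, u1 t⟫
        - κc / ν * ⟪perp (u t), κc • perp (u t) - F b • u t - ν • u1 t⟫
        = 2 * κc * l t - ν * a ^ 2 - κc ^ 2 / ν * b ^ 2 := by
      simp only [inner_sub_right, real_inner_smul_right]
      rw [inner_perp_self' (u t), inner_perp_perp' (u t)]
      have e1 : ⟪u1 t, perp (u t)⟫ = l t := real_inner_comm _ _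
      have e2 : ⟪perp (u t), u1 t⟫ = l t := rfl
      have e3 : ⟪u1 t, u t⟫ = ⟪u t, u1 t⟫ := real_inner_comm _ _
      have h1 : ⟪u1 t, u1 t⟫ = a ^ 2 := real_inner_self_eq_norm_sq _
      have h2 : ⟪u t, u t⟫ = b ^ 2 := real_inner_self_eq_norm_sq _
      rw [e1, e2, e3, h1, h2]
      field_simp
      ring
    rw [expand]
    have hab : κc * l t ≤ |κc| * (b * a) := by
      calc κc * l t ≤ |κc * l t| := le_abs_self _
      _ = |κc| * |l t| := abs_mul _ _
      _ ≤ |κc| * (b * a) := by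
          apply mul_le_mul_of_nonneg_left _ (abs_nonneg _)
          calc |l t| ≤ ‖perp (u t)‖ * ‖u1 t‖ := abs_real_inner_le_norm _ _
          _ = b * a := by rw [norm_perp']
    have key : ν * a ^ 2 + κc ^ 2 / ν * b ^ 2 - 2 * (|κc| * (b * a))
        = (ν * a - |κc| * b) ^ 2 / ν := by
      field_simp
      ring_nf
      rw [sq_abs]
      ring
    have h3 : 0 ≤ ν * a ^ 2 + κc ^ 2 / ν * b ^ 2 - 2 * (|κc| * (b * a)) := by
      rw [key]; positivity
    linarith
  -- H is antitone on [0, ∞)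
  have hH_anti : AntitoneOn H (Set.Ici 0) := by
    apply antitoneOn_of_deriv_nonpos (convex_Ici 0)
    · exact fun t ht => ((hHderiv t ht).continuousAt).continuousWithinAt
    · intro t ht
      rw [interior_Ici] at ht
      exact ((hHderiv t (le_of_lt ht)).differentiableAt).differentiableWithinAt
    · intro t ht
      rw [interior_Ici] at ht
      exact hHd_nonpos t ht
  set K : ℝ := H 0 with hKdef
  have hHK : ∀ t : ℝ, 0 ≤ t → H t ≤ K := fun t ht =>
    hH_anti (Set.self_mem_Ici) ht ht
  -- lower bound on H
  set Q : ℝ → ℝ := fun y => G y - c * y with hQdef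
  have hlow : ∀ t : ℝ, 0 ≤ t →
      (1 - θ)/2 * ‖u1 t‖ ^ 2 + Q (n t) ≤ H t := by
    intro t ht
    set a := ‖u1 t‖ with hadef
    set b := ‖u t‖ with hbdef
    have h1 : ⟪u1 t, u1 t⟫ = a ^ 2 := real_inner_self_eq_norm_sq _
    have hcross : κc / ν * l t ≤ θ/2 * a ^ 2 + c * b ^ 2 := by
      have hab : κc / ν * l t ≤ |κc| / ν * (b * a) := by
        calc κc / ν * l t ≤ |κc / ν * l t| := le_abs_self _
        _ = |κc| / ν * |l t| := by rw [abs_mul, abs_div, abs_of_pos hν]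
        _ ≤ |κc| / ν * (b * a) := by
            apply mul_le_mul_of_nonneg_left _ (by positivity)
            calc |l t| ≤ ‖perp (u t)‖ * ‖u1 t‖ := abs_real_inner_le_norm _ _
            _ = b * a := by rw [norm_perp']
      have key : θ/2 * a ^ 2 + c * b ^ 2 - |κc| / ν * (b * a)
          = (θ * ν * a - |κc| * b) ^ 2 / (2 * θ * ν ^ 2) := by
        rw [hcdef]
        field_simp
        ring_nf
        rw [sq_abs]
        ring
      nlinarith [div_nonneg (sq_nonneg (θ * ν * a - |κc| * b)) (le_of_lt (by positivity : (0:ℝ) < 2 * θ * ν ^ 2))]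
    have hHt : H t = 1/2 * ⟪u1 t, u1 t⟫ + G (n t) - κc/ν * l t := rfl
    have hQt : Q (n t) = G (n t) - c * n t := rfl
    rw [hHt, hQt, h1, hnnorm t, ← hbdef]
    linarith
  have hQK : ∀ t : ℝ, 0 ≤ t → Q (n t) ≤ K := by
    intro t ht
    have h4 : 0 ≤ (1 - θ)/2 * ‖u1 t‖ ^ 2 :=
      mul_nonneg (by linarith) (sq_nonneg _)
    exact le_trans (le_add_of_nonneg_left h4) ((hlow t ht).trans (hHK t ht))
  -- integrability helpers
  have hfecont : ContinuousOn fe (Set.Ioi 0) := hfe_lip.continuousOn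
  have hfdcont : ContinuousOn fd (Set.Ioi 0) := hfd_lip.continuousOn
  have hcont_rfe : ContinuousOn (fun r => r * fe r) (Set.Ioi 0) :=
    continuousOn_id.mul hfecont
  have hcont_rfd : ContinuousOn (fun r => r * fd r) (Set.Ioi 0) :=
    continuousOn_id.mul hfdcont
  have hsubIoi : ∀ p q : ℝ, 0 < p → 0 < q → Set.uIcc p q ⊆ Set.Ioi 0 :=
    fun p q hp hq x hx => lt_of_lt_of_le (lt_min hp hq) hx.1
  have hII : ∀ p q : ℝ, 0 < p → 0 < q →
      IntervalIntegrable (fun r => r * fe r) volume p q := fun p q hp hq =>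
    (hcont_rfe.mono (hsubIoi p q hp hq)).intervalIntegrable
  have hIId : ∀ p q : ℝ, 0 < p → 0 < q →
      IntervalIntegrable (fun r => r * fd r) volume p q := fun p q hp hq =>
    (hcont_rfd.mono (hsubIoi p q hp hq)).intervalIntegrable
  have hgI : ∀ p q : ℝ, 0 < p → 0 < q → IntervalIntegrable g volume p q :=
    fun p q hp hq => (hgcont.mono (hsubIoi p q hp hq)).intervalIntegrable
  -- divergence of the repulsion integral near 0
  set φ : ℝ → ℝ := fun x => ∫ r in x..rp, r * fe r with hφdef
  have hφ_big : ∀ M : ℝ, ∃ x₀ : ℝ, 0 < x₀ ∧ x₀ ≤ rp ∧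
      ∀ x : ℝ, 0 < x → x ≤ x₀ → M ≤ φ x := by
    intro M
    have hex : ∃ x₀ : ℝ, (0 < x₀ ∧ x₀ ≤ rp) ∧ M ≤ φ x₀ := by
      by_contra hcon
      push_neg at hcon
      apply hfe_div
      apply MeasureTheory.integrableOn_Ioc_of_intervalIntegral_norm_bounded_left
        (I := M) (a := fun i : ℕ => rp / (i + 1)) (l := atTop)
      · intro i
        have hpos : 0 < rp / ((i : ℝ) + 1) := by positivity
        refine ((hcont_rfe.mono ?_).integrableOn_Icc).mono_set Set.Ioc_subset_Icc_self
        intro x hx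
        exact lt_of_lt_of_le hpos hx.1
      · have h1 : Tendsto (fun i : ℕ => ((i : ℝ) + 1)) atTop atTop :=
          tendsto_atTop_add_const_right _ 1 tendsto_natCast_atTop_atTop
        exact tendsto_const_nhds.div_atTop h1
      · filter_upwards with i
        have hpos : 0 < rp / ((i : ℝ) + 1) := by positivity
        have hle : rp / ((i : ℝ) + 1) ≤ rp := by
          apply div_le_self hrp.le
          have : (0:ℝ) ≤ (i : ℝ) := Nat.cast_nonneg i
          linarith
        have heq : ∫ x in Set.Ioc (rp / ((i : ℝ) + 1)) rp, ‖x * fe x‖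
            = φ (rp / ((i : ℝ) + 1)) := by
          rw [hφdef]
          simp only []
          rw [intervalIntegral.integral_of_le hle]
          apply MeasureTheory.setIntegral_congr_fun measurableSet_Ioc
          intro x hx
          have hx0 : 0 < x := lt_trans hpos hx.1
          show ‖x * fe x‖ = x * fe x
          rw [Real.norm_eq_abs, abs_of_nonneg (mul_nonneg hx0.le (hfe_nonneg x hx0))]
        rw [heq]
        exact (hcon _ ⟨hpos, hle⟩).le
    obtain ⟨x₀, ⟨hx₀0, hx₀rp⟩, hMx₀⟩ := hex
    refine ⟨x₀, hx₀0, hx₀rp, ?_⟩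
    intro x hx hxx₀
    have h1 : (∫ r in x..x₀, r * fe r) + φ x₀ = φ x :=
      intervalIntegral.integral_add_adjacent_intervals (hII x x₀ hx hx₀0)
        (hII x₀ rp hx₀0 hrp)
    have h2 : 0 ≤ ∫ r in x..x₀, r * fe r :=
      intervalIntegral.integral_nonneg hxx₀ (fun r hr =>
        mul_nonneg (le_trans hx.le hr.1) (hfe_nonneg r (lt_of_lt_of_le hx hr.1)))
    linarith
  -- substitution: potential in terms of the radial integral
  have hsubst : ∀ x : ℝ, 0 < x → x ≤ rp →
      (∫ s in (x^2)..(rp^2), g s) = ∫ r in x..rp, r * F r := by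
    intro x hx hxrp
    have huIcc : Set.uIcc x rp = Set.Icc x rp := Set.uIcc_of_le hxrp
    have himpos : ∀ r ∈ Set.uIcc x rp, 0 < r := by
      intro r hr
      rw [huIcc] at hr
      exact lt_of_lt_of_le hx hr.1
    have hf : ContinuousOn (fun r : ℝ => r^2) (Set.uIcc x rp) :=
      (continuous_pow 2).continuousOn
    have hff' : ∀ r ∈ Set.Ioo (min x rp) (max x rp),
        HasDerivWithinAt (fun r : ℝ => r^2) (2*r) (Set.Ioi r) r := by
      intro r _
      have := hasDerivAt_pow 2 r
      simpa using this.hasDerivWithinAt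
    have hf' : ContinuousOn (fun r : ℝ => 2*r) (Set.uIcc x rp) :=
      (continuous_const.mul continuous_id).continuousOn
    have hgim : ContinuousOn g ((fun r : ℝ => r^2) '' Set.uIcc x rp) := by
      apply hgcont.mono
      rintro s ⟨r, hr, rfl⟩
      exact pow_pos (himpos r hr) 2
    have key := intervalIntegral.integral_comp_smul_deriv'' hf hff' hf' hgim
    have hcong : Set.EqOn (fun r : ℝ => (2*r) • (g ∘ (fun r : ℝ => r^2)) r)
        (fun r => r * F r) (Set.uIcc x rp) := by
      intro r hr
      have hr0 : 0 < r := himpos r hr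
      simp only [Function.comp, smul_eq_mul, hgdef]
      rw [Real.sqrt_sq hr0.le]
      ring
    rw [← intervalIntegral.integral_congr hcong, key]
  -- lower bound for G near zero
  have hG0 : ∀ y : ℝ, 0 < y → y ≤ rp^2 →
      φ (Real.sqrt y) - κp * (Cd * rp^2/2) ≤ G y := by
    intro y hy hyrp
    set x := Real.sqrt y with hxdef
    have hx0 : 0 < x := Real.sqrt_pos.2 hy
    have hxrp : x ≤ rp := by
      rw [hxdef]
      calc Real.sqrt y ≤ Real.sqrt (rp^2) := Real.sqrt_le_sqrt hyrp
      _ = rp := Real.sqrt_sq hrp.le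
    have hx2 : x^2 = y := Real.sq_sqrt hy.le
    have hGy : G y = -(∫ s in (x^2)..(rp^2), g s) := by
      rw [hx2]
      exact intervalIntegral.integral_symm y (rp^2)
    rw [hGy, hsubst x hx0 hxrp]
    have hIfd := hIId x rp hx0 hrp
    have hIfe := hII x rp hx0 hrp
    have hsplit : (∫ r in x..rp, r * F r)
        = κp * (∫ r in x..rp, r * fd r) - φ x := by
      rw [hφdef]
      simp only []
      rw [← intervalIntegral.integral_const_mul,
        ← intervalIntegral.integral_sub (hIfd.const_mul κp) hIfe]
      apply intervalIntegral.integral_congr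
      intro r _
      simp only [hFdef]
      ring
    rw [hsplit]
    have hb : (∫ r in x..rp, r * fd r) ≤ Cd * rp^2/2 := by
      have h1 : (∫ r in x..rp, r * fd r) ≤ ∫ r in x..rp, r * Cd := by
        apply intervalIntegral.integral_mono_on hxrp hIfd
          ((continuous_id.mul continuous_const).intervalIntegrable _ _)
        intro r hr
        have hr0 : 0 < r := lt_of_lt_of_le hx0 hr.1
        exact mul_le_mul_of_nonneg_left (hCd r hr0) hr0.le
      have h2 : (∫ r in x..rp, r * Cd) = (rp^2 - x^2)/2 * Cd := by
        rw [intervalIntegral.integral_mul_const, integral_id]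
      nlinarith [sq_nonneg x, hCd0]
    have := mul_le_mul_of_nonneg_left hb hκp.le
    linarith
  -- growth of G at infinity
  set ε : ℝ := κp * γm / 2 - c with hεdef
  have hε : 0 < ε := by rw [hεdef]; linarith
  have hFlim : Tendsto F atTop (𝓝 (κp * γm)) := by
    have h := (hfd_lim.const_mul κp).sub hfe_lim
    simpa [hFdef] using h
  have hev : ∀ᶠ r in atTop, 2*c + ε < F r :=
    hFlim.eventually (eventually_gt_nhds (by rw [hεdef]; linarith))
  obtain ⟨R₀, hR₀⟩ := eventually_atTop.1 hev
  set R : ℝ := max R₀ rp with hRdef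
  have hRrp : rp ≤ R := le_max_right _ _
  have hR0 : 0 < R := lt_of_lt_of_le hrp hRrp
  have hR2 : (0:ℝ) < R^2 := by positivity
  have hFR : ∀ r : ℝ, R ≤ r → 2*c + ε < F r := fun r hr =>
    hR₀ r (le_trans (le_max_left _ _) hr)
  have hGrow : ∀ y : ℝ, R^2 ≤ y → G (R^2) + (c + ε/2) * (y - R^2) ≤ G y := by
    intro y hy
    have hy0 : 0 < y := lt_of_lt_of_le hR2 hy
    have hadd : (∫ s in (rp^2)..(R^2), g s) + (∫ s in (R^2)..y, g s)
        = ∫ s in (rp^2)..y, g s :=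
      intervalIntegral.integral_add_adjacent_intervals (hgI _ _ hrp2 hR2) (hgI _ _ hR2 hy0)
    have hGy : G (R^2) + (∫ s in (R^2)..y, g s) = G y := hadd
    have hmono : (c + ε/2) * (y - R^2) ≤ ∫ s in (R^2)..y, g s := by
      have h1 : (∫ _s in (R^2)..y, (c + ε/2)) ≤ ∫ s in (R^2)..y, g s := by
        apply intervalIntegral.integral_mono_on hy intervalIntegrable_const
          (hgI _ _ hR2 hy0)
        intro s hs
        have hsR : R ≤ Real.sqrt s := by
          rw [← Real.sqrt_sq hR0.le]
          exact Real.sqrt_le_sqrt hs.1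
        have h2 := hFR (Real.sqrt s) hsR
        show c + ε/2 ≤ 1/2 * F (Real.sqrt s)
        clear_value F c ε
        linarith only [h2]
      rw [intervalIntegral.integral_const, smul_eq_mul] at h1
      clear_value c ε
      linarith only [h1]
    clear_value G c ε
    linarith only [hGy, hmono]
  -- choice of the lower barrier A
  obtain ⟨x₀, hx₀0, hx₀rp, hφM⟩ := hφ_big (K + κp * (Cd * rp^2/2) + c * rp^2 + 1)
  set A : ℝ := x₀^2 with hAdef
  have hA0 : 0 < A := by positivity
  have hArp : A ≤ rp^2 := by
    rw [hAdef]
    exact pow_le_pow_left₀ hx₀0.le hx₀rp 2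
  have hQA : ∀ y : ℝ, 0 < y → y < A → K < Q y := by
    intro y hy hyA
    have hyrp : y ≤ rp^2 := le_trans hyA.le hArp
    have h1 := hG0 y hy hyrp
    have h2 : Real.sqrt y ≤ x₀ := by
      rw [← Real.sqrt_sq hx₀0.le]
      exact Real.sqrt_le_sqrt hyA.le
    have h3 := hφM (Real.sqrt y) (Real.sqrt_pos.2 hy) h2
    have h4 : c * y ≤ c * rp^2 := mul_le_mul_of_nonneg_left hyrp hc0
    have h5 : Q y = G y - c * y := rfl
    clear_value Q G K φ c Cd
    linarith only [h1, h3, h4, h5]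
  -- choice of the upper barrier B
  set X : ℝ := G (R^2) - c * R^2 with hXdef
  set B : ℝ := R^2 + max 0 ((K - X) * (2/ε)) + 1 with hBdef
  have hBR : R^2 ≤ B := by
    rw [hBdef]
    have := le_max_left (0:ℝ) ((K - X) * (2/ε))
    linarith
  have hQB : ∀ y : ℝ, B < y → K < Q y := by
    intro y hy
    have hy' : R^2 ≤ y := le_trans hBR hy.le
    have h1 := hGrow y hy'
    have h2 : Q y = G y - c * y := rfl
    have h5 : max 0 ((K - X) * (2/ε)) ≥ (K - X) * (2/ε) := le_max_right _ _
    have h6 : (ε/2) * ((K - X) * (2/ε)) = K - X := by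
      field_simp
    have h7 : (ε/2) * (max 0 ((K - X) * (2/ε))) ≥ K - X := by
      have := mul_le_mul_of_nonneg_left h5 (half_pos hε).le
      linarith
    have h8 : (ε/2) * (y - R^2) > (ε/2) * (max 0 ((K - X) * (2/ε)) + 1) := by
      apply mul_lt_mul_of_pos_left _ (half_pos hε)
      rw [hBdef] at hy
      linarith only [hy]
    have h9 : (ε/2) * (max 0 ((K - X) * (2/ε)) + 1)
        = (ε/2) * (max 0 ((K - X) * (2/ε))) + ε/2 := by ring
    have h10 : (c + ε/2) * (y - R^2)
        = c * y - c * R^2 + (ε/2) * (y - R^2) := by ring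
    have h11 : X = G (R^2) - c * R^2 := hXdef
    clear_value Q G K X c ε
    linarith only [h1, h2, h7, h8, h9, h10, h11, half_pos hε]
  -- membership of n t in [A, B]
  have hmem : ∀ t : ℝ, 0 ≤ t → A ≤ n t ∧ n t ≤ B := by
    intro t ht
    have hQn := hQK t ht
    constructor
    · by_contra hcon
      push_neg at hcon
      exact absurd hQn (not_le.2 (hQA (n t) (hnpos t ht) hcon))
    · by_contra hcon
      push_neg at hcon
      exact absurd hQn (not_le.2 (hQB (n t) hcon))
  have hAB : A ≤ B := le_trans (hmem 0 le_rfl).1 (hmem 0 le_rfl).2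
  -- minimum of Q on [A, B]
  have hQcont : ContinuousOn Q (Set.Icc A B) := by
    intro y hy
    have hy0 : 0 < y := lt_of_lt_of_le hA0 hy.1
    have : ContinuousAt Q y := by
      apply ContinuousAt.sub (hGderiv y hy0).continuousAt
      exact continuousAt_const.mul continuousAt_id
    exact this.continuousWithinAt
  obtain ⟨y₀, hy₀mem, hy₀min⟩ :=
    isCompact_Icc.exists_isMinOn (Set.nonempty_Icc.2 hAB) hQcont
  set m : ℝ := Q y₀ with hmdef
  constructor
  · refine ⟨Real.sqrt A, Real.sqrt B, Real.sqrt_pos.2 hA0, Real.sqrt_le_sqrt hAB, ?_⟩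
    intro t ht
    have h := hmem t ht
    constructor
    · rw [← hnsqrt t]
      exact Real.sqrt_le_sqrt h.1
    · rw [← hnsqrt t]
      exact Real.sqrt_le_sqrt h.2
  · refine ⟨Real.sqrt ((K - m) * (2/(1-θ))), ?_⟩
    intro t ht
    have h1 := hlow t ht
    have h2 := hHK t ht
    have h3 : m ≤ Q (n t) := hy₀min ⟨(hmem t ht).1, (hmem t ht).2⟩
    have hθ' : (0:ℝ) < 1 - θ := by clear_value θ; linarith only [hθ1]
    have h4 : ‖u1 t‖^2 ≤ (K - m) * (2/(1-θ)) := by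
      have h5 : (1-θ)/2 * ‖u1 t‖^2 ≤ K - m := by
        clear_value m Q H K n u1 θ
        linarith only [h1, h2, h3]
      calc ‖u1 t‖^2 = (2/(1-θ)) * ((1-θ)/2 * ‖u1 t‖^2) := by field_simp
      _ ≤ (2/(1-θ)) * (K - m) := mul_le_mul_of_nonneg_left h5 (by positivity)
      _ = (K - m) * (2/(1-θ)) := by ring
    calc ‖u1 t‖ = Real.sqrt (‖u1 t‖^2) := (Real.sqrt_sq (norm_nonneg _)).symm
    _ ≤ Real.sqrt ((K - m) * (2/(1-θ))) := Real.sqrt_le_sqrt h4
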